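/- In the upper half-space model, let 𝔥 be the horoball {x² + y² + (z−h)² ≤ h²} based at 0 with Euclidean diameter 2h, and let L = {(t, y₀, 1) : t ∈ ℝ} be a horizontal horocycle at height 1. If R > 0 satisfies e^R > (α+1)², then the Euclidean length of L ∩ 𝔥_R is at most 1/(α+1) times the Euclidean length of L ∩ 𝔥, where 𝔥_R is the horoball {x² + y² ≤ 2zhe^{−R} − z²} at depth R inside 𝔥. -/
import Mathlib


open MeasureTheory

lemma set_eq_Icc (c : ℝ) (hc : 0 ≤ c) :
    {t : ℝ | t ^ 2 ≤ c} = Set.Icc (-Real.sqrt c) (Real.sqrt c) := by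
  ext t
  simp only [Set.mem_setOf_eq, Set.mem_Icc]
  constructor
  · intro ht
    have := Real.sqrt_le_sqrt ht
    rw [Real.sqrt_sq_eq_abs] at this
    exact abs_le.mp this
  · intro ht
    have habs : |t| ≤ Real.sqrt c := abs_le.mpr ht
    calc t ^ 2 = |t| ^ 2 := (sq_abs t).symm
      _ ≤ Real.sqrt c ^ 2 := by
          exact pow_le_pow_left₀ (abs_nonneg t) habs 2
      _ = c := Real.sq_sqrt hc

lemma vol_set (c : ℝ) (hc : 0 ≤ c) :
    (volume {t : ℝ | t ^ 2 ≤ c}).toReal = 2 * Real.sqrt c := by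
  rw [set_eq_Icc c hc, Real.volume_Icc, ENNReal.toReal_ofReal (by nlinarith [Real.sqrt_nonneg c])]
  ring

/-- In the upper half-space model, let `𝔥 = {x² + y² + (z−h)² ≤ h²}` be the horoball based
at `0` of Euclidean diameter `2h`, and `L = {(t, y₀, 1)}` the horizontal horocycle at
height `1`.  The intersections are `L ∩ 𝔥 = {t : t² ≤ 2h − 1 − y₀²}` and
`L ∩ 𝔥_R = {t : t² ≤ 2he^{−R} − 1 − y₀²}`, where `𝔥_R` is the horoball at depth `R`
inside `𝔥`.  If `e^R > (α+1)²` then the length of `L ∩ 𝔥_R` is at most `1/(α+1)` times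
the length of `L ∩ 𝔥`. -/
theorem stmt_3 (α h y₀ R : ℝ) (hα : 0 < α) (hh : 0 < h)
    (hR : (α + 1) ^ 2 < Real.exp R) :
    (volume {t : ℝ | t ^ 2 ≤ 2 * h * Real.exp (-R) - 1 - y₀ ^ 2}).toReal ≤
      (volume {t : ℝ | t ^ 2 ≤ 2 * h - 1 - y₀ ^ 2}).toReal / (α + 1) := by
  set cR := 2 * h * Real.exp (-R) - 1 - y₀ ^ 2 with hcR
  set c := 2 * h - 1 - y₀ ^ 2 with hc
  have hα1 : (0:ℝ) < α + 1 := by linarith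
  have hexp : (α + 1) ^ 2 * Real.exp (-R) < 1 := by
    have h1 : (α + 1) ^ 2 * Real.exp (-R) < Real.exp R * Real.exp (-R) :=
      mul_lt_mul_of_pos_right hR (Real.exp_pos _)
    rwa [← Real.exp_add, add_neg_cancel, Real.exp_zero] at h1
  have hone : (1:ℝ) ≤ (α + 1) ^ 2 := by nlinarith
  rcases lt_or_ge cR 0 with hneg | hpos
  · have : {t : ℝ | t ^ 2 ≤ cR} = ∅ := by
      ext t; simp only [Set.mem_setOf_eq, Set.mem_empty_iff_false, iff_false]
      nlinarith [sq_nonneg t]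
    rw [this]
    simp only [measure_empty, ENNReal.toReal_zero]
    positivity
  · have hkey : (α + 1) ^ 2 * cR ≤ c := by
      have h1 : (α + 1) ^ 2 * (2 * h * Real.exp (-R)) ≤ 2 * h := by
        nlinarith [Real.exp_pos (-R)]
      nlinarith
    have hcpos : 0 ≤ c := le_trans (by positivity) hkey
    rw [vol_set cR hpos, vol_set c hcpos]
    have hsqrt : (α + 1) * Real.sqrt cR ≤ Real.sqrt c := by
      have := Real.sqrt_le_sqrt hkey
      rwa [Real.sqrt_mul (by positivity) cR, Real.sqrt_sq hα1.le] at this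
    rw [le_div_iff₀ hα1]
    nlinarith [Real.sqrt_nonneg cR]
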